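/- Let R be a von Neumann algebra and A, B selfadjoint elements with spectral families E^A and E^B. Then A ≤_s B (i.e., the observable function of A is pointwise at most that of B on nonzero projections) if and only if E^B_λ ≤ E^A_λ for all real λ. -/
import Mathlib


/-- A bounded spectral family in a complete lattice `L` (of projections):
an increasing, order-right-continuous family of projections that is
eventually `⊥` below and eventually `⊤` above. -/
structure SpectralFamily (L : Type*) [CompleteLattice L] where
  E : ℝ → L
  mono : Monotone E
  rightCont : ∀ l : ℝ, E l = ⨅ m : Set.Ioi l, E m.1
  eq_bot : ∃ l : ℝ, E l = ⊥
  eq_top : ∃ l : ℝ, E l = ⊤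

/-- The observable function of a spectral family, on (nonzero) projections:
`f_A(P) = inf { λ | P ≤ E^A_λ }`. -/
noncomputable def obsFun {L : Type*} [CompleteLattice L] (F : SpectralFamily L) (P : L) : ℝ :=
  sInf {l : ℝ | P ≤ F.E l}

lemma obsFun_set_nonempty {L : Type*} [CompleteLattice L] (F : SpectralFamily L) (P : L) :
    {l : ℝ | P ≤ F.E l}.Nonempty := by
  obtain ⟨l, hl⟩ := F.eq_top
  exact ⟨l, by simp [hl]⟩

lemma obsFun_set_bddBelow {L : Type*} [CompleteLattice L] (F : SpectralFamily L) {P : L}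
    (hP : P ≠ ⊥) : BddBelow {l : ℝ | P ≤ F.E l} := by
  obtain ⟨l0, hl0⟩ := F.eq_bot
  refine ⟨l0, fun x hx => ?_⟩
  by_contra h
  push_neg at h
  exact hP (le_bot_iff.mp (hl0 ▸ (hx.trans (F.mono h.le))))

/-- `A ≤_s B` (pointwise comparison of observable functions on nonzero
projections) holds iff `E^B_λ ≤ E^A_λ` for all real `λ`. -/
theorem spectral_order_iff_obsFun_le {L : Type*} [CompleteLattice L]
    (A B : SpectralFamily L) :
    (∀ P : L, P ≠ ⊥ → obsFun A P ≤ obsFun B P) ↔ ∀ l : ℝ, B.E l ≤ A.E l := by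
  constructor
  · intro h l
    by_cases hb : B.E l = ⊥
    · simp [hb]
    have h1 : obsFun A (B.E l) ≤ l := (h _ hb).trans (csInf_le (obsFun_set_bddBelow B hb) le_rfl)
    -- show B.E l ≤ A.E m for all m > l
    rw [A.rightCont l]
    refine le_iInf fun ⟨m, hm⟩ => ?_
    have : ∃ x ∈ {x : ℝ | B.E l ≤ A.E x}, x < m := by
      by_contra hc
      push_neg at hc
      have : m ≤ obsFun A (B.E l) := le_csInf (obsFun_set_nonempty A _) hc
      exact absurd (this.trans h1) (not_le.mpr hm)
    obtain ⟨x, hx, hxm⟩ := this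
    exact hx.trans (A.mono hxm.le)
  · intro h P hP
    exact csInf_le_csInf (obsFun_set_bddBelow A hP) (obsFun_set_nonempty B P)
      (fun x hx => hx.trans (h x))
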